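/- arXiv:1205.0735 — 4 statements merged into one kernel-verified Lean document; each statement's English description precedes it below -/
import Mathlib

section
/- Define integers M(n,k) for n, k ≥ 0 by M(0,0) = 1, M(0,k) = 0 for k ≥ 1, M(n,k) = 0 for k < 0, and the recurrence M(n+1,k) = (n+2k+2)·M(n,k) + (n−2k+2)·M(n,k−1). Let L be the operator sending a function f to the derivative of (sec·f), i.e. L(f)(x) = d/dx (sec(x)·f(x)). Then for every n ≥ 0 and every real x with cos(x) ≠ 0, the n-th iterate of L applied to sec satisfies L^n(sec)(x) = ∑_{k=0}^{⌊n/2⌋} M(n,k) · tan(x)^{n−2k} · sec(x)^{n+2k+1}. -/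
/-- The coefficients M(n,k): M(0,0)=1, M(0,k)=0 for k ≠ 0 (in particular k ≥ 1 and k < 0),
and M(n+1,k) = (n+2k+2)·M(n,k) + (n−2k+2)·M(n,k−1). -/
def M : ℕ → ℤ → ℤ
  | 0, k => if k = 0 then 1 else 0
  | n + 1, k => ((n : ℤ) + 2 * k + 2) * M n k + ((n : ℤ) - 2 * k + 2) * M n (k - 1)

/-- sec(x) = 1/cos(x). -/
noncomputable def sec (x : ℝ) : ℝ := (Real.cos x)⁻¹

/-- The operator L sending f to the derivative of sec·f. -/
noncomputable def L (f : ℝ → ℝ) : ℝ → ℝ := deriv (fun x => sec x * f x)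

lemma M_neg : ∀ (n : ℕ) (k : ℤ), k < 0 → M n k = 0 := by
  intro n
  induction n with
  | zero => intro k hk; simp [M]; omega
  | succ n ih =>
    intro k hk
    simp only [M, ih k hk, ih (k-1) (by omega), mul_zero, add_zero]

lemma M_big : ∀ (n : ℕ) (k : ℤ), (n : ℤ) < 2 * k → M n k = 0 := by
  intro n
  induction n with
  | zero =>
    intro k hk; simp [M]; omega
  | succ n ih =>
    intro k hk
    push_cast at hk
    rcases lt_or_ge (n : ℤ) (2 * (k - 1)) with h | h
    · simp only [M, ih k (by omega), ih (k-1) h, mul_zero, add_zero, zero_add]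
    · have h2 : (n : ℤ) - 2 * k + 2 = 0 := by omega
      simp only [M, ih k (by omega), mul_zero, zero_add, h2, zero_mul]

lemma hasDerivAt_sec (x : ℝ) (hx : Real.cos x ≠ 0) :
    HasDerivAt sec (sec x * Real.tan x) x := by
  have h : HasDerivAt sec _ x := (Real.hasDerivAt_cos x).inv hx
  convert h using 1
  rw [sec, Real.tan_eq_sin_div_cos, neg_neg, pow_two, div_eq_mul_inv, div_eq_mul_inv, mul_inv]
  ring

lemma key (n : ℕ) : ∀ x : ℝ, Real.cos x ≠ 0 →
    L^[n] sec x =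
      ∑ k ∈ Finset.range (n + 1),
        (M n (k : ℤ) : ℝ) * Real.tan x ^ (n - 2 * k) * sec x ^ (n + 2 * k + 1) := by
  induction n with
  | zero => intro x hx; simp [M, sec]
  | succ n ih =>
    intro x hx
    rw [Function.iterate_succ_apply']
    show deriv (fun y => sec y * L^[n] sec y) x = _
    have hev : (fun y => sec y * L^[n] sec y) =ᶠ[nhds x]
        (fun y => ∑ k ∈ Finset.range (n + 1),
          (M n (k : ℤ) : ℝ) * Real.tan y ^ (n - 2 * k) * sec y ^ (n + 2 * k + 2)) := by
      have hne : ∀ᶠ y in nhds x, Real.cos y ≠ 0 :=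
        Real.continuous_cos.continuousAt.eventually_ne hx
      filter_upwards [hne] with y hy
      rw [ih y hy, Finset.mul_sum]
      refine Finset.sum_congr rfl fun k _ => ?_
      rw [pow_succ]
      ring
    rw [hev.deriv_eq]
    -- derivative of each term
    have hder : HasDerivAt
        (fun y => ∑ k ∈ Finset.range (n + 1),
          (M n (k : ℤ) : ℝ) * Real.tan y ^ (n - 2 * k) * sec y ^ (n + 2 * k + 2))
        (∑ k ∈ Finset.range (n + 1),
          (M n (k : ℤ) : ℝ) *
            (((n - 2 * k : ℕ) : ℝ) * Real.tan x ^ (n - 2 * k - 1) * (1 / Real.cos x ^ 2) *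
                sec x ^ (n + 2 * k + 2) +
              Real.tan x ^ (n - 2 * k) *
                (((n + 2 * k + 2 : ℕ) : ℝ) * sec x ^ (n + 2 * k + 1) *
                  (sec x * Real.tan x)))) x := by
      refine HasDerivAt.fun_sum fun k _ => ?_
      have ht := (Real.hasDerivAt_tan hx).pow (n - 2 * k)
      have hs := (hasDerivAt_sec x hx).pow (n + 2 * k + 2)
      have := (ht.mul hs).const_mul ((M n (k : ℤ) : ℝ))
      refine this.congr_of_eventuallyEq (Filter.Eventually.of_forall fun y => ?_)
      simp only [Pi.pow_apply, Pi.mul_apply]; ring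
    rw [hder.deriv]
    -- now pure algebra
    have hsec2 : 1 / Real.cos x ^ 2 = sec x ^ 2 := by
      rw [sec]; field_simp
    rw [hsec2]
    -- RHS expansion
    have hRHS : ∑ k ∈ Finset.range (n + 2),
        (M (n+1) (k : ℤ) : ℝ) * Real.tan x ^ (n + 1 - 2 * k) * sec x ^ (n + 1 + 2 * k + 1)
        = (∑ k ∈ Finset.range (n + 2),
            (((n : ℝ) + 2 * k + 2) * (M n (k : ℤ) : ℝ)) * Real.tan x ^ (n + 1 - 2 * k) *
              sec x ^ (n + 2 * k + 2))
          + ∑ k ∈ Finset.range (n + 2),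
            (((n : ℝ) - 2 * k + 2) * (M n ((k : ℤ) - 1) : ℝ)) * Real.tan x ^ (n + 1 - 2 * k) *
              sec x ^ (n + 2 * k + 2) := by
      rw [← Finset.sum_add_distrib]
      refine Finset.sum_congr rfl fun k _ => ?_
      show ((((n : ℤ) + 2 * k + 2) * M n k + ((n : ℤ) - 2 * k + 2) * M n ((k : ℤ) - 1) : ℤ) : ℝ) * _ * _ = _
      push_cast
      ring_nf
    rw [hRHS]
    -- first sum: drop last term
    have hA : ∑ k ∈ Finset.range (n + 2),
        (((n : ℝ) + 2 * k + 2) * (M n (k : ℤ) : ℝ)) * Real.tan x ^ (n + 1 - 2 * k) *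
          sec x ^ (n + 2 * k + 2)
        = ∑ k ∈ Finset.range (n + 1),
            (((n : ℝ) + 2 * k + 2) * (M n (k : ℤ) : ℝ)) * Real.tan x ^ (n + 1 - 2 * k) *
              sec x ^ (n + 2 * k + 2) := by
      rw [Finset.sum_range_succ, M_big n (n+1 : ℕ) (by push_cast; omega)]
      simp
    -- second sum: shift index
    have hB : ∑ k ∈ Finset.range (n + 2),
        (((n : ℝ) - 2 * k + 2) * (M n ((k : ℤ) - 1) : ℝ)) * Real.tan x ^ (n + 1 - 2 * k) *
          sec x ^ (n + 2 * k + 2)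
        = ∑ k ∈ Finset.range (n + 1),
            (((n : ℝ) - 2 * k) * (M n (k : ℤ) : ℝ)) * Real.tan x ^ (n - 1 - 2 * k) *
              sec x ^ (n + 2 * k + 4) := by
      rw [Finset.sum_range_succ']
      rw [show ((0:ℕ) : ℤ) - 1 = -1 by norm_num, M_neg n (-1) (by norm_num)]
      simp only [Int.cast_zero, mul_zero, zero_mul, add_zero]
      refine Finset.sum_congr rfl fun k _ => ?_
      have e1 : n + 1 - 2 * (k + 1) = n - 1 - 2 * k := by omega
      have e2 : n + 2 * (k + 1) + 2 = n + 2 * k + 4 := by omega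
      rw [e1, e2]
      push_cast
      ring_nf
    rw [hA, hB, ← Finset.sum_add_distrib]
    refine Finset.sum_congr rfl fun k hk => ?_
    rcases le_or_gt (2 * k) n with h | h
    · have e1 : n - 2 * k - 1 = n - 1 - 2 * k := by omega
      have e2 : n - 2 * k + 1 = n + 1 - 2 * k := by omega
      have e3 : ((n - 2 * k : ℕ) : ℝ) = (n : ℝ) - 2 * k := by
        rw [Nat.cast_sub h]; push_cast; ring_nf
      rw [e1, e3, ← e2, pow_succ]
      push_cast
      ring
    · have hM : M n (k : ℤ) = 0 := M_big n k (by push_cast; omega)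
      simp [hM]

theorem iterate_L_sec (n : ℕ) (x : ℝ) (hx : Real.cos x ≠ 0) :
    L^[n] sec x =
      ∑ k ∈ Finset.range (n / 2 + 1),
        (M n k : ℝ) * Real.tan x ^ (n - 2 * k) * sec x ^ (n + 2 * k + 1) := by
  rw [key n x hx]
  refine (Finset.sum_subset ?_ ?_).symm
  · intro k hk
    simp only [Finset.mem_range] at *
    omega
  · intro k hk hk2
    simp only [Finset.mem_range] at *
    have : M n (k : ℤ) = 0 := M_big n k (by push_cast; omega)
    simp [this]
end

section
/- Let L be the operator sending a function f to the derivative of (sec·f), i.e. L(f)(x) = d/dx (sec(x)·f(x)). Then for every natural number m ≥ 0 and every real x with cos(x) ≠ 0, L^{2m+1}(sec)(x) = (2m+1)! · ∑_{k=0}^{m} C(2m+2, 2k+1) · tan(x)^{2m−2k+1} · (1 + tan(x)^2)^{m+1+k}. -/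
private lemma one_sub_sin_ne (x : ℝ) (hx : Real.cos x ≠ 0) : (1 : ℝ) - Real.sin x ≠ 0 := by
  have hs := Real.sin_sq_add_cos_sq x
  intro h
  apply hx
  nlinarith [sq_nonneg (Real.cos x)]

private lemma one_add_sin_ne (x : ℝ) (hx : Real.cos x ≠ 0) : (1 : ℝ) + Real.sin x ≠ 0 := by
  have hs := Real.sin_sq_add_cos_sq x
  intro h
  apply hx
  nlinarith [sq_nonneg (Real.cos x)]

private lemma hasDerivAt_A (n : ℕ) (x : ℝ) (hA : (1:ℝ) - Real.sin x ≠ 0) :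
    HasDerivAt (fun y => ((1 - Real.sin y)⁻¹) ^ (n+1))
      ((n+1) * Real.cos x * ((1 - Real.sin x)⁻¹) ^ (n+2)) x := by
  have h1 : HasDerivAt (fun y => 1 - Real.sin y) (-Real.cos x) x :=
    (Real.hasDerivAt_sin x).const_sub 1
  have h2 := h1.inv hA
  have h3 := h2.pow (n+1)
  refine h3.congr_deriv ?_
  have : ((1 - Real.sin x)⁻¹) ^ (n+2) = ((1 - Real.sin x)⁻¹) ^ n * ((1 - Real.sin x)^2)⁻¹ := by
    rw [← inv_pow, ← pow_add]
  rw [this]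
  simp only [Pi.inv_apply]
  push_cast
  field_simp

private lemma hasDerivAt_B (n : ℕ) (x : ℝ) (hB : (1:ℝ) + Real.sin x ≠ 0) :
    HasDerivAt (fun y => ((1 + Real.sin y)⁻¹) ^ (n+1))
      (-((n+1) * Real.cos x * ((1 + Real.sin x)⁻¹) ^ (n+2))) x := by
  have h1 : HasDerivAt (fun y => 1 + Real.sin y) (Real.cos x) x :=
    (Real.hasDerivAt_sin x).const_add 1
  have h2 := h1.inv hB
  have h3 := h2.pow (n+1)
  refine h3.congr_deriv ?_
  have : ((1 + Real.sin x)⁻¹) ^ (n+2) = ((1 + Real.sin x)⁻¹) ^ n * ((1 + Real.sin x)^2)⁻¹ := by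
    rw [← inv_pow, ← pow_add]
  rw [this]
  simp only [Pi.inv_apply]
  push_cast
  field_simp

private lemma key_formula (n : ℕ) : ∀ x : ℝ, Real.cos x ≠ 0 →
    L^[n] sec x = (n.factorial : ℝ)/2 * Real.cos x *
      (((1 - Real.sin x)⁻¹) ^ (n+1) + (-1:ℝ)^n * ((1 + Real.sin x)⁻¹) ^ (n+1)) := by
  induction n with
  | zero =>
    intro x hx
    have hA := one_sub_sin_ne x hx
    have hB := one_add_sin_ne x hx
    have hs := Real.sin_sq_add_cos_sq x
    simp only [Function.iterate_zero_apply, sec, Nat.factorial_zero, pow_one, pow_zero, one_mul,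
      Nat.cast_one, zero_add]
    field_simp
    nlinarith [hs]
  | succ n ih =>
    intro x hx
    have hA := one_sub_sin_ne x hx
    have hB := one_add_sin_ne x hx
    rw [Function.iterate_succ_apply']
    show deriv (fun y => sec y * L^[n] sec y) x = _
    have hev : ∀ᶠ y in nhds x, Real.cos y ≠ 0 :=
      Real.continuous_cos.continuousAt.eventually_ne hx
    have hEq : (fun y => sec y * L^[n] sec y) =ᶠ[nhds x]
        (fun y => (n.factorial : ℝ)/2 *
          (((1 - Real.sin y)⁻¹) ^ (n+1) + (-1:ℝ)^n * ((1 + Real.sin y)⁻¹) ^ (n+1))) := by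
      filter_upwards [hev] with y hy
      rw [ih y hy, sec]
      field_simp
    rw [hEq.deriv_eq]
    have hD : HasDerivAt (fun y => (n.factorial : ℝ)/2 *
        (((1 - Real.sin y)⁻¹) ^ (n+1) + (-1:ℝ)^n * ((1 + Real.sin y)⁻¹) ^ (n+1)))
        ((n.factorial : ℝ)/2 *
          ((n+1) * Real.cos x * ((1 - Real.sin x)⁻¹) ^ (n+2) +
            (-1:ℝ)^n * -((n+1) * Real.cos x * ((1 + Real.sin x)⁻¹) ^ (n+2)))) x :=
      (((hasDerivAt_A n x hA).add ((hasDerivAt_B n x hB).const_mul ((-1:ℝ)^n))).const_mul _)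
    rw [hD.deriv]
    rw [Nat.factorial_succ]
    push_cast
    ring

private lemma sum_even_vanish (F : ℕ → ℝ) (h : ∀ k, F (2*k) = 0) :
    ∀ M, ∑ j ∈ Finset.range (2*M+1), F j = ∑ k ∈ Finset.range M, F (2*k+1) := by
  intro M
  induction M with
  | zero => simpa using h 0
  | succ M ih =>
    have e1 : 2*(M+1)+1 = (2*M+1)+1+1 := by ring
    rw [e1, Finset.sum_range_succ, Finset.sum_range_succ, ih, Finset.sum_range_succ]
    have h2 : (2*M+1)+1 = 2*(M+1) := by ring
    rw [h2, h (M+1)]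
    ring

private lemma odd_binom_sum (s : ℝ) (m : ℕ) :
    2 * ∑ k ∈ Finset.range (m+1), (((2*m+2).choose (2*k+1) : ℝ) * s^(2*m+1-2*k))
      = (1+s)^(2*m+2) - (1-s)^(2*m+2) := by
  set N := 2*m+2 with hN
  -- reflect the sum
  have hrefl : ∑ k ∈ Finset.range (m+1), ((N.choose (2*k+1) : ℝ) * s^(2*m+1-2*k))
      = ∑ k ∈ Finset.range (m+1), ((N.choose (2*k+1) : ℝ) * s^(2*k+1)) := by
    rw [← Finset.sum_range_reflect (fun k => (N.choose (2*k+1) : ℝ) * s^(2*k+1)) (m+1)]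
    apply Finset.sum_congr rfl
    intro k hk
    have hk' : k ≤ m := Nat.lt_succ_iff.mp (Finset.mem_range.mp hk)
    have e1 : 2*(m+1-1-k)+1 = 2*m+1-2*k := by omega
    have e3 : N.choose (2*m+1-2*k) = N.choose (2*k+1) := by
      rw [show 2*m+1-2*k = N - (2*k+1) by omega]
      exact Nat.choose_symm (by omega)
    rw [e1, e3]
  rw [hrefl]
  have hadd1 : (s+1)^N = ∑ j ∈ Finset.range (N+1), s^j * 1^(N-j) * (N.choose j : ℝ) := add_pow s 1 N
  have hadd2 : ((-s)+1)^N = ∑ j ∈ Finset.range (N+1), (-s)^j * 1^(N-j) * (N.choose j : ℝ) :=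
    add_pow (-s) 1 N
  have h1s : (1+s)^N = ∑ j ∈ Finset.range (N+1), s^j * (N.choose j : ℝ) := by
    rw [add_comm 1 s, hadd1]; simp
  have h2s : (1-s)^N = ∑ j ∈ Finset.range (N+1), (-s)^j * (N.choose j : ℝ) := by
    rw [show (1:ℝ) - s = (-s) + 1 by ring, hadd2]; simp
  rw [h1s, h2s, ← Finset.sum_sub_distrib]
  have hNN : N + 1 = 2*(m+1)+1 := by omega
  rw [hNN]
  rw [sum_even_vanish (fun j => s^j * (N.choose j : ℝ) - (-s)^j * (N.choose j : ℝ))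
    (by intro k; simp only [Even.neg_pow (even_two_mul k)]; ring) (m+1)]
  rw [Finset.mul_sum]
  apply Finset.sum_congr rfl
  intro k _
  have : (-s)^(2*k+1) = -(s^(2*k+1)) := by
    rw [pow_succ, pow_mul]
    ring_nf
  rw [this]
  ring

theorem iterate_L_sec_odd (m : ℕ) (x : ℝ) (hx : Real.cos x ≠ 0) :
    L^[2 * m + 1] sec x =
      ((2 * m + 1).factorial : ℝ) *
        ∑ k ∈ Finset.range (m + 1),
          ((2 * m + 2).choose (2 * k + 1)) *
            Real.tan x ^ (2 * m + 1 - 2 * k) * (1 + Real.tan x ^ 2) ^ (m + 1 + k) := by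
  have hA := one_sub_sin_ne x hx
  have hB := one_add_sin_ne x hx
  have hs := Real.sin_sq_add_cos_sq x
  set c := Real.cos x with hc
  set s := Real.sin x with hsin
  rw [key_formula (2*m+1) x hx]
  have hneg : ((-1:ℝ))^(2*m+1) = -1 := Odd.neg_one_pow ⟨m, by ring⟩
  rw [hneg]
  have ht : Real.tan x = s * c⁻¹ := by
    rw [Real.tan_eq_sin_div_cos, div_eq_mul_inv]
  have h1t : 1 + Real.tan x ^ 2 = (c⁻¹)^2 := by
    rw [ht]
    field_simp
    nlinarith [hs]
  -- rewrite the sum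
  have hsum : ∑ k ∈ Finset.range (m + 1),
      (((2 * m + 2).choose (2 * k + 1)) : ℝ) *
        Real.tan x ^ (2 * m + 1 - 2 * k) * (1 + Real.tan x ^ 2) ^ (m + 1 + k)
      = (c⁻¹)^(4*m+3) *
        ∑ k ∈ Finset.range (m + 1), (((2*m+2).choose (2*k+1) : ℝ) * s^(2*m+1-2*k)) := by
    rw [Finset.mul_sum]
    apply Finset.sum_congr rfl
    intro k hk
    have hk' : k ≤ m := Nat.lt_succ_iff.mp (Finset.mem_range.mp hk)
    rw [h1t, ht, mul_pow, ← pow_mul]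
    have e : (2*m+1-2*k) + 2*(m+1+k) = 4*m+3 := by omega
    rw [← e, pow_add]
    ring
  rw [hsum]
  have hbin := odd_binom_sum s m
  have hAB : (1-s)*(1+s) = c^2 := by nlinarith [hs]
  have hdiff : ((1 - s)⁻¹) ^ (2*m+1+1) - ((1 + s)⁻¹) ^ (2*m+1+1)
      = ((1+s)^(2*m+2) - (1-s)^(2*m+2)) / ((1-s)*(1+s))^(2*m+2) := by
    have h1 : (1-s)⁻¹^(2*m+2) * (1-s)^(2*m+2) = 1 := by
      rw [← mul_pow, inv_mul_cancel₀ hA, one_pow]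
    have h2 : (1+s)⁻¹^(2*m+2) * (1+s)^(2*m+2) = 1 := by
      rw [← mul_pow, inv_mul_cancel₀ hB, one_pow]
    rw [mul_pow, eq_div_iff (mul_ne_zero (pow_ne_zero _ hA) (pow_ne_zero _ hB))]
    linear_combination (1+s)^(2*m+2) * h1 - (1-s)^(2*m+2) * h2
  have goal_eq : ((2*m+1).factorial : ℝ)/2 * c *
      (((1 - s)⁻¹) ^ (2*m+1+1) + (-1) * ((1 + s)⁻¹) ^ (2*m+1+1))
      = ((2*m+1).factorial : ℝ) * ((c⁻¹)^(4*m+3) *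
        ∑ k ∈ Finset.range (m + 1), (((2*m+2).choose (2*k+1) : ℝ) * s^(2*m+1-2*k))) := by
    rw [show ((1 - s)⁻¹) ^ (2*m+1+1) + (-1) * ((1 + s)⁻¹) ^ (2*m+1+1)
        = ((1 - s)⁻¹) ^ (2*m+1+1) - ((1 + s)⁻¹) ^ (2*m+1+1) by ring]
    have hcpow : ((c^2)^(2*m+2) : ℝ) = c^(4*m+3) * c := by
      rw [← pow_mul, show 2*(2*m+2) = (4*m+3)+1 by ring, pow_succ]
    have scalar : ∀ (F S : ℝ), F/2 * c * (2*S / (c^(4*m+3) * c)) = F * (c⁻¹^(4*m+3) * S) := by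
      intro F S
      rw [inv_pow]
      field_simp
    rw [hdiff, ← hbin, hAB, hcpow]
    exact scalar _ _
  exact goal_eq
end

section
/- Let L be the operator sending a function f to the derivative of (sec·f), i.e. L(f)(x) = d/dx (sec(x)·f(x)). Then for every natural number m ≥ 0 and every real x with cos(x) ≠ 0, L^{2m}(tan)(x) = (2m)! · ∑_{k=0}^{m} C(2m+1, 2k) · tan(x)^{2m−2k+1} · (1 + tan(x)^2)^{m+k}. -/
open Finset

/-- Key binomial identity. -/
lemma key_binom (n a : ℕ) :
    (n + 1) * (n + 2).choose (a + 2) =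
      (n + 1).choose (a + 2) * (n + 3 + a) + (n + 1).choose a * (n + 1 - a) := by
  have c1 := Nat.choose_succ_right_eq (n + 1) a
  have c2 := Nat.choose_succ_right_eq (n + 1) (a + 1)
  rw [Nat.choose_succ_succ (n + 1) (a + 1)]
  rcases le_or_gt a n with h | h
  · obtain ⟨d, rfl⟩ := Nat.exists_eq_add_of_le h
    rw [show a + d + 1 - a = d + 1 from by omega] at c1
    rw [show a + d + 1 - (a + 1) = d from by omega] at c2
    rw [show a + d + 1 - a = d + 1 from by omega]
    zify at c1 c2 ⊢
    linear_combination c1 - c2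
  · rw [Nat.choose_eq_zero_of_lt (show n + 1 < a + 1 by omega),
      Nat.choose_eq_zero_of_lt (show n + 1 < a + 2 by omega),
      Nat.sub_eq_zero_of_le (show n + 1 ≤ a by omega)]
    simp

lemma hasDerivAt_sec_pow (a : ℕ) {x : ℝ} (hx : Real.cos x ≠ 0) :
    HasDerivAt (fun y => sec y ^ a) ((a : ℝ) * (sec x ^ a * Real.tan x)) x := by
  cases a with
  | zero => simpa using hasDerivAt_const x (1 : ℝ)
  | succ n =>
    have h := ((Real.hasDerivAt_cos x).inv hx).fun_pow (n + 1)
    refine h.congr_deriv ?_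
    simp only [sec, Real.tan_eq_sin_div_cos, Nat.add_sub_cancel, neg_neg,
      div_eq_mul_inv, ← inv_pow, Pi.inv_apply]
    ring

lemma hasDerivAt_tan_pow (b : ℕ) {x : ℝ} (hx : Real.cos x ≠ 0) :
    HasDerivAt (fun y => Real.tan y ^ b) ((b : ℝ) * (sec x ^ 2 * Real.tan x ^ (b - 1))) x := by
  have h := (Real.hasDerivAt_tan hx).fun_pow b
  refine h.congr_deriv ?_
  simp only [sec, inv_pow, one_div]
  ring

lemma hasDerivAt_term (a b : ℕ) {x : ℝ} (hx : Real.cos x ≠ 0) :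
    HasDerivAt (fun y => sec y ^ a * Real.tan y ^ b)
      ((a : ℝ) * (sec x ^ a * Real.tan x ^ (b + 1)) +
        (b : ℝ) * (sec x ^ (a + 2) * Real.tan x ^ (b - 1))) x := by
  have h := (hasDerivAt_sec_pow a hx).fun_mul (hasDerivAt_tan_pow b hx)
  refine h.congr_deriv ?_
  ring

/-- Termwise identity for the inductive step. -/
lemma term_identity (n k : ℕ) (s t : ℝ) :
    ((n + 1).choose (2 * (k + 1)) : ℝ) *
        (((n + 1 + 2 * (k + 1) : ℕ) : ℝ) * (s ^ (n + 1 + 2 * (k + 1)) * t ^ (n + 1 - 2 * (k + 1) + 1))) +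
      ((n + 1).choose (2 * k) : ℝ) *
        (((n + 1 - 2 * k : ℕ) : ℝ) * (s ^ (n + 1 + 2 * k + 2) * t ^ (n + 1 - 2 * k - 1))) =
    (↑(n + 1) : ℝ) * (((n + 2).choose (2 * (k + 1)) : ℝ) * (s ^ (n + 1 + 2 * (k + 1)) * t ^ (n + 1 + 1 - 2 * (k + 1)))) := by
  have e0 : 2 * (k + 1) = 2 * k + 2 := by ring
  have e1 : n + 1 + (2 * k + 2) = n + 3 + 2 * k := by omega
  have e2 : n + 1 + 2 * k + 2 = n + 3 + 2 * k := by ring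
  have e3 : n + 1 - 2 * k - 1 = n - 2 * k := by omega
  have e4 : n + 1 + 1 - (2 * k + 2) = n - 2 * k := by omega
  rw [e0, e1, e2, e3, e4]
  rcases le_or_gt (2 * k + 1) n with h | h
  · have e5 : n + 1 - (2 * k + 2) + 1 = n - 2 * k := by omega
    rw [e5]
    have hk := key_binom n (2 * k)
    have hle : 2 * k ≤ n + 1 := by omega
    have hk' : ((n : ℝ) + 1) * ((n + 2).choose (2 * k + 2) : ℝ) =
        ((n + 1).choose (2 * k + 2) : ℝ) * ((n : ℝ) + 3 + 2 * k) +
          ((n + 1).choose (2 * k) : ℝ) * ((n : ℝ) + 1 - 2 * k) := by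
      exact_mod_cast congrArg (Nat.cast (R := ℝ)) hk
    have hc : ((n + 1 - 2 * k : ℕ) : ℝ) = (n : ℝ) + 1 - 2 * k := by
      push_cast [Nat.cast_sub hle]; ring
    rw [hc]
    push_cast
    linear_combination (-(s ^ (n + 3 + 2 * k) * t ^ (n - 2 * k))) * hk'
  · rcases lt_or_eq_of_le (show n ≤ 2 * k by omega) with h2 | h2
    · rw [Nat.choose_eq_zero_of_lt (show n + 1 < 2 * k + 2 by omega),
        Nat.choose_eq_zero_of_lt (show n + 2 < 2 * k + 2 by omega),
        Nat.sub_eq_zero_of_le (show n + 1 ≤ 2 * k by omega)]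
      simp
    · subst h2
      rw [Nat.choose_eq_zero_of_lt (show 2 * k + 1 < 2 * k + 2 by omega),
        Nat.choose_self]
      simp [Nat.choose_succ_self_right, show 2 * k + 1 - 2 * k = 1 from by omega]

/-- The summation identity used in the inductive step. -/
lemma sum_step (n : ℕ) (s t : ℝ) :
    ∑ k ∈ Finset.range (n + 2),
        ((n + 1).choose (2 * k) : ℝ) *
          (((n + 1 + 2 * k : ℕ) : ℝ) * (s ^ (n + 1 + 2 * k) * t ^ (n + 1 - 2 * k + 1)) +
            ((n + 1 - 2 * k : ℕ) : ℝ) * (s ^ (n + 1 + 2 * k + 2) * t ^ (n + 1 - 2 * k - 1))) =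
      ((n + 1 : ℕ) : ℝ) * ∑ k ∈ Finset.range (n + 3),
        ((n + 2).choose (2 * k) : ℝ) * (s ^ (n + 1 + 2 * k) * t ^ (n + 1 + 1 - 2 * k)) := by
  set U : ℕ → ℝ := fun k =>
    ((n + 1).choose (2 * k) : ℝ) *
      (((n + 1 + 2 * k : ℕ) : ℝ) * (s ^ (n + 1 + 2 * k) * t ^ (n + 1 - 2 * k + 1))) with hUdef
  set V : ℕ → ℝ := fun k =>
    ((n + 1).choose (2 * k) : ℝ) *
      (((n + 1 - 2 * k : ℕ) : ℝ) * (s ^ (n + 1 + 2 * k + 2) * t ^ (n + 1 - 2 * k - 1))) with hVdef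
  set W : ℕ → ℝ := fun k =>
    ((n + 1 : ℕ) : ℝ) *
      (((n + 2).choose (2 * k) : ℝ) * (s ^ (n + 1 + 2 * k) * t ^ (n + 1 + 1 - 2 * k))) with hWdef
  have hUV : ∀ k, U (k + 1) + V k = W (k + 1) := fun k => term_identity n k s t
  have hU0 : U 0 = W 0 := by
    simp only [hUdef, hWdef]
    norm_num
  have hUlast : U (n + 2) = 0 := by
    simp only [hUdef]
    rw [Nat.choose_eq_zero_of_lt (show n + 1 < 2 * (n + 2) by omega)]
    simp
  calc ∑ k ∈ Finset.range (n + 2),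
        ((n + 1).choose (2 * k) : ℝ) *
          (((n + 1 + 2 * k : ℕ) : ℝ) * (s ^ (n + 1 + 2 * k) * t ^ (n + 1 - 2 * k + 1)) +
            ((n + 1 - 2 * k : ℕ) : ℝ) * (s ^ (n + 1 + 2 * k + 2) * t ^ (n + 1 - 2 * k - 1)))
      = ∑ k ∈ Finset.range (n + 2), (U k + V k) := by
        refine Finset.sum_congr rfl fun k _ => ?_
        simp only [hUdef, hVdef]
        ring
    _ = (∑ k ∈ Finset.range (n + 2), U k) + ∑ k ∈ Finset.range (n + 2), V k := by
        rw [Finset.sum_add_distrib]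
    _ = (∑ k ∈ Finset.range (n + 3), U k) + ∑ k ∈ Finset.range (n + 2), V k := by
        rw [Finset.sum_range_succ U (n + 2), hUlast, add_zero]
    _ = ((∑ k ∈ Finset.range (n + 2), U (k + 1)) + U 0) + ∑ k ∈ Finset.range (n + 2), V k := by
        rw [Finset.sum_range_succ' U (n + 2)]
    _ = U 0 + ∑ k ∈ Finset.range (n + 2), (U (k + 1) + V k) := by
        rw [Finset.sum_add_distrib]; ring
    _ = W 0 + ∑ k ∈ Finset.range (n + 2), W (k + 1) := by
        rw [hU0]
        congr 1
        exact Finset.sum_congr rfl fun k _ => hUV k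
    _ = ∑ k ∈ Finset.range (n + 3), W k := by
        rw [Finset.sum_range_succ' W (n + 2)]; ring
    _ = ((n + 1 : ℕ) : ℝ) * ∑ k ∈ Finset.range (n + 3),
          ((n + 2).choose (2 * k) : ℝ) * (s ^ (n + 1 + 2 * k) * t ^ (n + 1 + 1 - 2 * k)) := by
        rw [Finset.mul_sum]

/-- The closed form for all iterates. -/
lemma iter_formula (n : ℕ) : ∀ x : ℝ, Real.cos x ≠ 0 →
    L^[n] Real.tan x = (n.factorial : ℝ) * ∑ k ∈ Finset.range (n + 2),
      ((n + 1).choose (2 * k) : ℝ) * (sec x ^ (n + 2 * k) * Real.tan x ^ (n + 1 - 2 * k)) := by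
  induction n with
  | zero =>
    intro x hx
    norm_num [Finset.sum_range_succ]
  | succ n ih =>
    intro x hx
    have hev : ∀ᶠ y in nhds x, Real.cos y ≠ 0 :=
      Real.continuous_cos.continuousAt.eventually_ne hx
    have heq : (fun y => sec y * L^[n] Real.tan y) =ᶠ[nhds x]
        (fun y => (n.factorial : ℝ) * ∑ k ∈ Finset.range (n + 2),
          ((n + 1).choose (2 * k) : ℝ) * (sec y ^ (n + 1 + 2 * k) * Real.tan y ^ (n + 1 - 2 * k))) := by
      filter_upwards [hev] with y hy
      rw [ih y hy, mul_left_comm]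
      congr 1
      rw [Finset.mul_sum]
      refine Finset.sum_congr rfl fun k _ => ?_
      ring
    have hD : HasDerivAt
        (fun y => (n.factorial : ℝ) * ∑ k ∈ Finset.range (n + 2),
          ((n + 1).choose (2 * k) : ℝ) * (sec y ^ (n + 1 + 2 * k) * Real.tan y ^ (n + 1 - 2 * k)))
        ((n.factorial : ℝ) * ∑ k ∈ Finset.range (n + 2),
          ((n + 1).choose (2 * k) : ℝ) *
            (((n + 1 + 2 * k : ℕ) : ℝ) * (sec x ^ (n + 1 + 2 * k) * Real.tan x ^ (n + 1 - 2 * k + 1)) +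
              ((n + 1 - 2 * k : ℕ) : ℝ) *
                (sec x ^ (n + 1 + 2 * k + 2) * Real.tan x ^ (n + 1 - 2 * k - 1)))) x := by
      refine HasDerivAt.const_mul _ (HasDerivAt.fun_sum fun k _ => ?_)
      exact (hasDerivAt_term (n + 1 + 2 * k) (n + 1 - 2 * k) hx).const_mul _
    rw [Function.iterate_succ_apply']
    show deriv (fun y => sec y * L^[n] Real.tan y) x = _
    rw [heq.deriv_eq, hD.deriv, sum_step n (sec x) (Real.tan x), Nat.factorial_succ]
    push_cast
    ring

theorem iterate_L_tan_even (m : ℕ) (x : ℝ) (hx : Real.cos x ≠ 0) :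
    L^[2 * m] Real.tan x =
      ((2 * m).factorial : ℝ) *
        ∑ k ∈ Finset.range (m + 1),
          ((2 * m + 1).choose (2 * k)) *
            Real.tan x ^ (2 * m + 1 - 2 * k) * (1 + Real.tan x ^ 2) ^ (m + k) := by
  rw [iter_formula (2 * m) x hx]
  congr 1
  have hsec : (1 : ℝ) + Real.tan x ^ 2 = sec x ^ 2 := by
    rw [sec, Real.tan_eq_sin_div_cos]
    field_simp
    exact Real.cos_sq_add_sin_sq x
  refine Eq.trans (Finset.sum_congr rfl fun k _ => ?_)
    ((Finset.sum_subset (Finset.range_subset_range.2 (show m + 1 ≤ 2 * m + 2 by omega)) ?_).symm)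
  · rw [hsec, ← pow_mul]
    ring
  · intro k hk1 hk2
    simp only [Finset.mem_range] at hk1 hk2
    rw [Nat.choose_eq_zero_of_lt (show 2 * m + 1 < 2 * k by omega)]
    simp
end

section
/- Let L be the operator sending a function f to the derivative of (sec·f), i.e. L(f)(x) = d/dx (sec(x)·f(x)). Then for every natural number m ≥ 0 and every real x with cos(x) ≠ 0, L^{2m+1}(tan)(x) = (2m+1)! · sec(x) · ∑_{k=0}^{m+1} C(2m+2, 2k) · tan(x)^{2m−2k+2} · (1 + tan(x)^2)^{m+k}. -/
open Polynomial

lemma keybin (n j : ℕ) :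
    (n + 3 + 2*j) * (n+1).choose (2*j+2) + (n + 1 - 2*j) * (n+1).choose (2*j) =
      (n + 1) * (n+2).choose (2*j+2) := by
  have h1 : (n+1).choose (2*j+2) * (2*j+2) = (n+1).choose (2*j+1) * (n - 2*j) := by
    have := Nat.choose_succ_right_eq (n+1) (2*j+1)
    simpa [Nat.succ_sub_succ] using this
  have h2 : (n+1).choose (2*j+1) * (2*j+1) = (n+1).choose (2*j) * (n+1 - 2*j) := by
    have := Nat.choose_succ_right_eq (n+1) (2*j)
    simpa using this
  have h3 : (n+2).choose (2*j+2) = (n+1).choose (2*j+1) + (n+1).choose (2*j+2) :=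
    Nat.choose_succ_succ _ _
  rcases le_or_gt (2*j) n with h | h
  · rw [h3]; nlinarith [h1, h2, Nat.sub_add_cancel h]
  · have z1 : (n+1).choose (2*j+2) = 0 := Nat.choose_eq_zero_of_lt (by omega)
    have z2 : (n+1).choose (2*j+1) = 0 := Nat.choose_eq_zero_of_lt (by omega)
    have z3 : n + 1 - 2*j ≤ 1 := by omega
    rcases Nat.lt_or_ge (2*j) (n+1) with h' | h'
    · omega
    · have z4 : (n+1).choose (2*j) = 0 ∨ n + 1 - 2*j = 0 := by
        rcases Nat.lt_or_ge (n+1) (2*j) with h'' | h''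
        · exact Or.inl (Nat.choose_eq_zero_of_lt h'')
        · right; omega
      rw [h3]; rcases z4 with z4 | z4 <;> simp [z1, z2, z4]

noncomputable def Q : ℝ[X] := 1 + X^2

lemma dQ : derivative Q = 2 * X := by
  simp [Q]
  exact one_add_one_eq_two

lemma termstep (n k : ℕ) :
    ((n:ℝ[X])+1) * X * (((n+1).choose (2*k) : ℝ[X]) * X^(n+1-2*k) * Q^k)
      + Q * derivative (((n+1).choose (2*k) : ℝ[X]) * X^(n+1-2*k) * Q^k)
    = ((n+1+2*k : ℕ):ℝ[X]) * (((n+1).choose (2*k) : ℝ[X])) * X^(n+2-2*k) * Q^k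
      + ((n+1-2*k : ℕ):ℝ[X]) * (((n+1).choose (2*k) : ℝ[X])) * X^(n-2*k) * Q^(k+1) := by
  rcases le_or_gt (2*k) (n+1) with h | h
  · have e1 : n + 2 - 2*k = (n+1-2*k) + 1 := by omega
    have e2 : n + 1 - 2*k - 1 = n - 2*k := by omega
    rw [derivative_mul, derivative_mul, derivative_natCast, derivative_X_pow, derivative_pow, dQ,
      e1, e2]
    cases k with
    | zero => push_cast; simp; ring
    | succ K =>
        have e4 : n + 1 - 2*(K+1) = n - (2*(K+1)-1) := by omega
        push_cast [e4]
        simp only [Nat.add_sub_cancel, pow_succ, map_add, map_one, Polynomial.C_eq_natCast]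
        ring
  · have hc : ((n+1).choose (2*k) : ℝ[X]) = 0 := by
      norm_cast; exact Nat.choose_eq_zero_of_lt h
    simp [hc]

noncomputable def S (n : ℕ) : ℝ[X] :=
  ∑ k ∈ Finset.range (n + 2), ((n+1).choose (2*k) : ℝ[X]) * X ^ (n + 1 - 2*k) * Q ^ k

noncomputable def P : ℕ → ℝ[X]
  | 0 => X
  | n + 1 => ((n : ℝ[X]) + 1) * X * P n + Q * derivative (P n)

lemma keyS (n : ℕ) : ((n:ℝ[X])+1) * S (n+1) = ((n:ℝ[X])+1) * X * S n + Q * derivative (S n) := by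
  have hR : ((n:ℝ[X])+1) * X * S n + Q * derivative (S n)
      = ∑ k ∈ Finset.range (n+2),
          (((n+1+2*k : ℕ):ℝ[X]) * (((n+1).choose (2*k) : ℝ[X])) * X^(n+2-2*k) * Q^k
           + ((n+1-2*k : ℕ):ℝ[X]) * (((n+1).choose (2*k) : ℝ[X])) * X^(n-2*k) * Q^(k+1)) := by
    rw [S, derivative_sum, Finset.mul_sum, Finset.mul_sum, ← Finset.sum_add_distrib]
    exact Finset.sum_congr rfl fun k _ => termstep n k
  rw [hR, Finset.sum_add_distrib]
  have hext : (∑ k ∈ Finset.range (n+3),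
          ((n+1+2*k : ℕ):ℝ[X]) * (((n+1).choose (2*k) : ℝ[X])) * X^(n+2-2*k) * Q^k)
      = ∑ k ∈ Finset.range (n+2),
          ((n+1+2*k : ℕ):ℝ[X]) * (((n+1).choose (2*k) : ℝ[X])) * X^(n+2-2*k) * Q^k := by
    rw [Finset.sum_range_succ]
    have h0 : (n+1).choose (2*(n+2)) = 0 := Nat.choose_eq_zero_of_lt (by omega)
    rw [h0]
    simp
  rw [← hext]
  have hL : ((n:ℝ[X])+1) * S (n+1)
      = ∑ k ∈ Finset.range (n+3),
          ((n:ℝ[X])+1) * (((n+2).choose (2*k) : ℝ[X]) * X^(n+2-2*k) * Q^k) := by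
    rw [S, Finset.mul_sum]
  rw [hL, Finset.sum_range_succ', Finset.sum_range_succ' (fun k =>
          ((n+1+2*k : ℕ):ℝ[X]) * (((n+1).choose (2*k) : ℝ[X])) * X^(n+2-2*k) * Q^k) (n+2)]
  have hsum : (∑ k ∈ Finset.range (n+2),
        ((n:ℝ[X])+1) * (((n+2).choose (2*(k+1)) : ℝ[X]) * X^(n+2-2*(k+1)) * Q^(k+1)))
      = ∑ k ∈ Finset.range (n+2),
        (((n+1+2*(k+1) : ℕ):ℝ[X]) * (((n+1).choose (2*(k+1)) : ℝ[X])) * X^(n+2-2*(k+1)) * Q^(k+1)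
         + ((n+1-2*k : ℕ):ℝ[X]) * (((n+1).choose (2*k) : ℝ[X])) * X^(n-2*k) * Q^(k+1)) := by
    refine Finset.sum_congr rfl fun k _ => ?_
    have e1 : n + 2 - 2*(k+1) = n - 2*k := by omega
    have e2 : 2*(k+1) = 2*k+2 := by omega
    rw [e1, e2]
    have hb : (((n + 3 + 2*k) * (n+1).choose (2*k+2) + (n + 1 - 2*k) * (n+1).choose (2*k) : ℕ) : ℝ[X])
        = (((n + 1) * (n+2).choose (2*k+2) : ℕ) : ℝ[X]) := by exact_mod_cast keybin n k
    push_cast at hb ⊢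
    linear_combination (-(X^(n-2*k) * Q^(k+1))) * hb
  rw [hsum, Finset.sum_add_distrib, Nat.choose_zero_right, Nat.choose_zero_right]
  push_cast
  ring

lemma P_eq (n : ℕ) : P n = ((n.factorial : ℕ) : ℝ[X]) * S n := by
  induction n with
  | zero =>
      simp [P, S, Finset.sum_range_succ]
  | succ n ih =>
      rw [P, ih, derivative_mul, derivative_natCast, zero_mul, zero_add]
      have hf : (((n+1).factorial : ℕ) : ℝ[X]) = ((n.factorial : ℕ) : ℝ[X]) * ((n:ℝ[X])+1) := by
        rw [Nat.factorial_succ]; push_cast; ring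
      rw [hf]
      linear_combination (-((n.factorial : ℕ) : ℝ[X])) * (keyS n)

lemma main_aux (n : ℕ) : ∀ (x : ℝ), Real.cos x ≠ 0 →
    L^[n] Real.tan x = sec x ^ n * (P n).eval (Real.tan x) := by
  induction n with
  | zero => intro x hx; simp [P]
  | succ n ih =>
      intro x hx
      rw [Function.iterate_succ_apply']
      have hU : IsOpen {y : ℝ | Real.cos y ≠ 0} :=
        isOpen_compl_singleton.preimage Real.continuous_cos
      have hEv : (fun y => sec y * L^[n] Real.tan y) =ᶠ[nhds x]
          (fun y => sec y ^ (n+1) * (P n).eval (Real.tan y)) := by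
        filter_upwards [hU.mem_nhds hx] with y hy
        rw [ih y hy, sec]
        ring
      rw [L, hEv.deriv_eq]
      have hsec1 : HasDerivAt (fun y => sec y) (Real.sin x / Real.cos x ^ 2) x := by
        have := (Real.hasDerivAt_cos x).inv hx
        have h : HasDerivAt (fun y => sec y) _ x := this
        simpa [div_eq_mul_inv] using h
      have hsec : HasDerivAt (fun y => sec y ^ (n+1))
          (((n:ℝ)+1) * sec x ^ n * (Real.sin x / Real.cos x ^ 2)) x := by
        have := hsec1.pow (n+1)
        have h : HasDerivAt (fun y => sec y ^ (n+1)) _ x := this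
        simpa using h
      have htan := Real.hasDerivAt_tan hx
      have hpoly : HasDerivAt (fun y => (P n).eval (Real.tan y))
          ((P n).derivative.eval (Real.tan x) * (1 / Real.cos x ^ 2)) x :=
        ((P n).hasDerivAt (Real.tan x)).comp x htan
      have hm : HasDerivAt (fun y => sec y ^ (n+1) * (P n).eval (Real.tan y)) _ x := hsec.mul hpoly
      rw [hm.deriv]
      have h12 : 1 + Real.tan x ^ 2 = (Real.cos x ^ 2)⁻¹ := by
        rw [← Real.inv_one_add_tan_sq hx, inv_inv]
      rw [P]
      simp only [eval_add, eval_mul, eval_pow, eval_X, eval_one, eval_natCast, Q, h12, sec,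
        Real.tan_eq_sin_div_cos]
      field_simp
      have hc : Real.cos x * (Real.cos x)⁻¹ = 1 := mul_inv_cancel₀ hx
      linear_combination (norm := ring_nf) (-((n:ℝ)+1) * (Real.cos x)⁻¹ ^ n * Real.sin x * eval ((Real.cos x)⁻¹ * Real.sin x) (P n)) * hc - ((Real.cos x)⁻¹ ^ n * eval ((Real.cos x)⁻¹ * Real.sin x) (derivative (P n)) * (Real.cos x)⁻¹) * Real.sin_sq_add_cos_sq x

theorem iterate_L_tan_odd (m : ℕ) (x : ℝ) (hx : Real.cos x ≠ 0) :
    L^[2 * m + 1] Real.tan x =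
      ((2 * m + 1).factorial : ℝ) * sec x *
        ∑ k ∈ Finset.range (m + 2),
          ((2 * m + 2).choose (2 * k)) *
            Real.tan x ^ (2 * m + 2 - 2 * k) * (1 + Real.tan x ^ 2) ^ (m + k) := by
  have h12 : 1 + Real.tan x ^ 2 = (Real.cos x ^ 2)⁻¹ := by
    rw [← Real.inv_one_add_tan_sq hx, inv_inv]
  have hsec2 : sec x ^ 2 = 1 + Real.tan x ^ 2 := by
    rw [h12, sec, ← inv_pow]
  have hsec2m : sec x ^ (2*m+1) = sec x * (1 + Real.tan x ^ 2) ^ m := by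
    rw [← hsec2, ← pow_mul, ← pow_succ']
  rw [main_aux _ x hx, P_eq, hsec2m]
  simp only [S, eval_mul, eval_natCast, eval_finset_sum, eval_pow, eval_X, eval_add, eval_one, Q]
  have htr : (∑ k ∈ Finset.range (2*m+1+2),
        (((2*m+1+1).choose (2*k) : ℝ)) * Real.tan x ^ (2*m+1+1-2*k) * (1+Real.tan x^2)^k)
      = ∑ k ∈ Finset.range (m+2),
        (((2*m+1+1).choose (2*k) : ℝ)) * Real.tan x ^ (2*m+1+1-2*k) * (1+Real.tan x^2)^k := by
    refine (Finset.sum_subset (Finset.range_subset_range.mpr (by omega)) fun k _ hk => ?_).symm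
    have hk' : m + 2 ≤ k := by
      by_contra h
      exact hk (Finset.mem_range.mpr (by omega))
    have hc : (2*m+1+1).choose (2*k) = 0 := Nat.choose_eq_zero_of_lt (by omega)
    simp [hc]
  rw [htr, Finset.mul_sum, Finset.mul_sum, Finset.mul_sum]
  refine Finset.sum_congr rfl fun k _ => ?_
  have e : 2*m+1+1-2*k = 2*m+2-2*k := by omega
  rw [e, pow_add]
  have e2 : ((2*m+1+1).choose (2*k) : ℝ) = ((2*m+2).choose (2*k) : ℝ) := by norm_num
  rw [e2]
  ring
end
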